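/- Suppose 0 < 1/m ≪ ε ≤ d' ≤ d ≪ 1. Let G be an (ε,d)-regular bipartite graph with vertex classes A and B of size m, and let G' be obtained from G by removing at most d'm vertices from each vertex class and at most d'm edges incident to each remaining vertex. Then G' is (2√(d'), d)-regular. -/

import Mathlib

open Finset
open scoped Classical

/-- The number of edges of the bipartite graph `E` between `X` and `Y`. -/
noncomputable def eCnt {A B : Type*} (E : A → B → Prop) (X : Finset A) (Y : Finset B) : ℕ :=
  ∑ x ∈ X, (Y.filter fun y => E x y).card

/-- The density `d(X,Y) = e(X,Y)/(|X||Y|)` of the bipartite graph `E` between `X` and `Y`. -/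
noncomputable def dens {A B : Type*} (E : A → B → Prop) (X : Finset A) (Y : Finset B) : ℝ :=
  (eCnt E X Y : ℝ) / ((X.card : ℝ) * (Y.card : ℝ))

/-- The pair `(A', B')` of the bipartite graph `E` is `(ε,d)`-regular: all `X ⊆ A'`,
`Y ⊆ B'` with `|X| ≥ ε|A'|`, `|Y| ≥ ε|B'|` satisfy `|d(A',B') - d(X,Y)| ≤ ε`, and the
density of the pair is `d ± ε`. -/
def IsRegularPair {A B : Type*} (E : A → B → Prop) (A' : Finset A) (B' : Finset B)
    (ε d : ℝ) : Prop :=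
  (∀ X ⊆ A', ∀ Y ⊆ B', ε * (A'.card : ℝ) ≤ (X.card : ℝ) →
      ε * (B'.card : ℝ) ≤ (Y.card : ℝ) → |dens E A' B' - dens E X Y| ≤ ε) ∧
  |dens E A' B' - d| ≤ ε

/-- The pair `(A', B')` is `(ε,d)`-superregular: it is `(ε,d)`-regular and moreover
every vertex of `A'` has degree `(d ± ε)|B'|` into `B'` and every vertex of `B'` has
degree `(d ± ε)|A'|` into `A'`. -/
def IsSuperRegularPair {A B : Type*} (E : A → B → Prop) (A' : Finset A) (B' : Finset B)
    (ε d : ℝ) : Prop :=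
  IsRegularPair E A' B' ε d ∧
  (∀ a ∈ A', |((B'.filter fun b => E a b).card : ℝ) - d * (B'.card : ℝ)| ≤ ε * (B'.card : ℝ)) ∧
  (∀ b ∈ B', |((A'.filter fun a => E a b).card : ℝ) - d * (A'.card : ℝ)| ≤ ε * (A'.card : ℝ))

lemma eCnt_mono {A B : Type*} {E E' : A → B → Prop} (h : ∀ a b, E' a b → E a b)
    (X : Finset A) (Y : Finset B) : eCnt E' X Y ≤ eCnt E X Y :=
  Finset.sum_le_sum fun x _ => Finset.card_le_card
    (Finset.monotone_filter_right _ (fun y _ hy => h x y hy))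

lemma eCnt_diff_le {A B : Type*} {E E' : A → B → Prop} {A' X : Finset A} {B' Y : Finset B}
    (hsub : ∀ a b, E' a b → E a b) (hX : X ⊆ A') (hY : Y ⊆ B') {c : ℝ}
    (hdeg : ∀ a ∈ A', ((B'.filter fun b => E a b ∧ ¬ E' a b).card : ℝ) ≤ c) :
    (eCnt E X Y : ℝ) ≤ (eCnt E' X Y : ℝ) + X.card * c := by
  have key : ∀ x ∈ X, ((Y.filter fun y => E x y).card : ℝ)
      ≤ ((Y.filter fun y => E' x y).card : ℝ) + c := by
    intro x hx
    have h1 : (Y.filter fun y => E x y) ⊆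
        (Y.filter fun y => E' x y) ∪ (Y.filter fun y => E x y ∧ ¬ E' x y) := by
      intro y hy
      simp only [mem_filter, mem_union] at *
      tauto
    have h2 : ((Y.filter fun y => E x y ∧ ¬ E' x y).card : ℝ) ≤ c := by
      refine le_trans ?_ (hdeg x (hX hx))
      exact_mod_cast Finset.card_le_card (Finset.filter_subset_filter _ hY)
    have h3 := (Finset.card_le_card h1).trans
      (Finset.card_union_le (Y.filter fun y => E' x y) (Y.filter fun y => E x y ∧ ¬ E' x y))
    have h3' : ((Y.filter fun y => E x y).card : ℝ) ≤
        ((Y.filter fun y => E' x y).card : ℝ) + ((Y.filter fun y => E x y ∧ ¬ E' x y).card : ℝ) := by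
      exact_mod_cast h3
    linarith
  unfold eCnt
  push_cast
  calc (∑ x ∈ X, ((Y.filter fun y => E x y).card : ℝ))
      ≤ ∑ x ∈ X, (((Y.filter fun y => E' x y).card : ℝ) + c) := Finset.sum_le_sum key
    _ = (∑ x ∈ X, ((Y.filter fun y => E' x y).card : ℝ)) + X.card * c := by
        rw [Finset.sum_add_distrib, Finset.sum_const, nsmul_eq_mul]

lemma dens_close {A B : Type*} {E E' : A → B → Prop} {A' X : Finset A} {B' Y : Finset B}
    (hsub : ∀ a b, E' a b → E a b) (hX : X ⊆ A') (hY : Y ⊆ B') {c : ℝ}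
    (hdeg : ∀ a ∈ A', ((B'.filter fun b => E a b ∧ ¬ E' a b).card : ℝ) ≤ c)
    (hXpos : 0 < (X.card : ℝ)) (hYpos : 0 < (Y.card : ℝ)) :
    |dens E X Y - dens E' X Y| ≤ c / (Y.card : ℝ) := by
  have h1 := eCnt_diff_le hsub hX hY hdeg
  have h2 : (eCnt E' X Y : ℝ) ≤ (eCnt E X Y : ℝ) := Nat.cast_le.mpr (eCnt_mono hsub X Y)
  unfold _root_.dens
  rw [div_sub_div_same, abs_div, abs_of_pos (mul_pos hXpos hYpos), abs_of_nonneg (by linarith)]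
  rw [div_le_div_iff₀ (mul_pos hXpos hYpos) hYpos]
  nlinarith

set_option maxHeartbeats 1000000 in
/-- Suppose `0 < 1/m ≪ ε ≤ d' ≤ d ≪ 1`.  If `G` is an `(ε,d)`-regular
bipartite graph with vertex classes `A`, `B` of size `m`, and `G'` is obtained from
`G` by removing at most `d'm` vertices from each vertex class and at most `d'm` edges
incident to each remaining vertex, then `G'` is `(2√d', d)`-regular.  The hierarchy
`≪` is expressed by nested quantifiers. -/
theorem stmt9 :
    ∃ d₀ : ℝ, 0 < d₀ ∧ ∀ d : ℝ, 0 < d → d ≤ d₀ →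
      ∀ d' ε : ℝ, 0 < ε → ε ≤ d' → d' ≤ d →
        ∃ m₀ : ℕ, ∀ m : ℕ, m₀ ≤ m →
          ∀ (A B : Type) [Fintype A] [Fintype B],
            Fintype.card A = m → Fintype.card B = m →
            ∀ (E E' : A → B → Prop) (A' : Finset A) (B' : Finset B),
              IsRegularPair E Finset.univ Finset.univ ε d →
              -- at most d'm vertices are removed from each class
              (m : ℝ) - d' * (m : ℝ) ≤ (A'.card : ℝ) →
              (m : ℝ) - d' * (m : ℝ) ≤ (B'.card : ℝ) →
              -- G' is a subgraph of G on the classes A', B'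
              (∀ a b, E' a b → E a b ∧ a ∈ A' ∧ b ∈ B') →
              -- at most d'm edges are removed at each remaining vertex
              (∀ a ∈ A', ((B'.filter fun b => E a b ∧ ¬ E' a b).card : ℝ) ≤ d' * (m : ℝ)) →
              (∀ b ∈ B', ((A'.filter fun a => E a b ∧ ¬ E' a b).card : ℝ) ≤ d' * (m : ℝ)) →
              IsRegularPair E' A' B' (2 * Real.sqrt d') d := by
  refine ⟨1/100, by norm_num, ?_⟩
  intro d hd hdd₀ d' ε hε hεd' hd'd
  refine ⟨1, ?_⟩
  intro m hm A B _ _ hA hB E E' A' B' hreg hA' hB' hsub hdegA hdegB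
  have hd'pos : 0 < d' := lt_of_lt_of_le hε hεd'
  have hd'le : d' ≤ 1/100 := hd'd.trans hdd₀
  set t := Real.sqrt d' with ht_def
  have ht2 : t ^ 2 = d' := Real.sq_sqrt hd'pos.le
  have htpos : 0 < t := Real.sqrt_pos.mpr hd'pos
  have htle : t ≤ 1/10 := by
    have h1 : t ≤ Real.sqrt (1/100) := Real.sqrt_le_sqrt hd'le
    have h100 : Real.sqrt (1/100) = 1/10 := by
      rw [show (1/100 : ℝ) = (1/10)^2 by norm_num, Real.sqrt_sq (by norm_num)]
    linarith
  have hm1 : (1:ℝ) ≤ (m:ℝ) := by exact_mod_cast hm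
  have hAu : ((Finset.univ : Finset A).card : ℝ) = m := by rw [Finset.card_univ, hA]
  have hBu : ((Finset.univ : Finset B).card : ℝ) = m := by rw [Finset.card_univ, hB]
  have hεt : ε ≤ t ^ 2 := by rw [ht2]; exact hεd'
  have htt : t ^ 2 ≤ t / 10 := by nlinarith
  have hA'pos : 0 < (A'.card : ℝ) := by nlinarith
  have hB'pos : 0 < (B'.card : ℝ) := by nlinarith
  have hsub' : ∀ a b, E' a b → E a b := fun a b h => (hsub a b h).1
  have key : ∀ X ⊆ A', ∀ Y ⊆ B', ε * m ≤ (X.card : ℝ) → ε * m ≤ (Y.card : ℝ) →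
      0 < (X.card : ℝ) → 0 < (Y.card : ℝ) →
      |dens E Finset.univ Finset.univ - dens E' X Y| ≤ ε + d' * m / (Y.card : ℝ) := by
    intro X hXA' Y hYB' hXc hYc hXpos hYpos
    have hreg1 := hreg.1 X (Finset.subset_univ X) Y (Finset.subset_univ Y)
      (by rw [hAu]; exact hXc) (by rw [hBu]; exact hYc)
    have hclose := dens_close hsub' hXA' hYB' hdegA hXpos hYpos
    calc |dens E Finset.univ Finset.univ - dens E' X Y|
        ≤ |dens E Finset.univ Finset.univ - dens E X Y| + |dens E X Y - dens E' X Y| :=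
          abs_sub_le _ _ _
      _ ≤ ε + d' * m / (Y.card : ℝ) := add_le_add hreg1 hclose
  have hεA' : ε * m ≤ (A'.card : ℝ) := by nlinarith
  have hεB' : ε * m ≤ (B'.card : ℝ) := by nlinarith
  have keyAB := key A' (le_refl _) B' (le_refl _) hεA' hεB' hA'pos hB'pos
  have boundB' : d' * m / (B'.card : ℝ) ≤ t / 2 := by
    rw [div_le_iff₀ hB'pos]
    nlinarith [mul_le_mul_of_nonneg_left hB' (le_of_lt htpos)]
  constructor
  · intro X hXA' Y hYB' hXcard hYcard
    have hXm : 2 * t * ((m : ℝ) - d' * m) ≤ (X.card : ℝ) := by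
      refine le_trans ?_ hXcard
      have := mul_le_mul_of_nonneg_left hA' (by positivity : (0:ℝ) ≤ 2 * t)
      linarith
    have hYm : 2 * t * ((m : ℝ) - d' * m) ≤ (Y.card : ℝ) := by
      refine le_trans ?_ hYcard
      have := mul_le_mul_of_nonneg_left hB' (by positivity : (0:ℝ) ≤ 2 * t)
      linarith
    have hXpos : 0 < (X.card : ℝ) := by nlinarith
    have hYpos : 0 < (Y.card : ℝ) := by nlinarith
    have hεX : ε * m ≤ (X.card : ℝ) := by nlinarith
    have hεY : ε * m ≤ (Y.card : ℝ) := by nlinarith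
    have keyXY := key X hXA' Y hYB' hεX hεY hXpos hYpos
    have boundY : d' * m / (Y.card : ℝ) ≤ 2 * t / 3 := by
      rw [div_le_iff₀ hYpos]
      nlinarith [mul_le_mul_of_nonneg_left hYm (le_of_lt htpos),
        mul_le_mul_of_nonneg_left hd'le
          (mul_nonneg (sq_nonneg t) (by linarith : (0:ℝ) ≤ (m:ℝ)))]
    calc |dens E' A' B' - dens E' X Y|
        ≤ |dens E Finset.univ Finset.univ - dens E' A' B'| +
          |dens E Finset.univ Finset.univ - dens E' X Y| := by
          rw [abs_sub_comm (dens E Finset.univ Finset.univ) (dens E' A' B')]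
          exact abs_sub_le _ _ _
      _ ≤ (ε + d' * m / (B'.card : ℝ)) + (ε + d' * m / (Y.card : ℝ)) := add_le_add keyAB keyXY
      _ ≤ 2 * t := by nlinarith
  · have hd := hreg.2
    calc |dens E' A' B' - d|
        ≤ |dens E' A' B' - dens E Finset.univ Finset.univ| +
          |dens E Finset.univ Finset.univ - d| := abs_sub_le _ _ _
      _ ≤ (ε + d' * m / (B'.card : ℝ)) + ε := by
          rw [abs_sub_comm]; exact add_le_add keyAB hd
      _ ≤ 2 * t := by nlinarith
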